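/- (Approximate triangle inequality for φ) Let L ∈ (0,∞) and n ∈ ℕ with n ≥ 1. Then for all (s₁,…,s_n) ∈ [0,L]^n one has φ(∏_{k=1}^n s_k) ≤ C · Σ_{k=1}^n φ(s_k), where C = n·max{2, L^{n−1}} and φ(s) := s·log s − s + 1 for s > 0, with φ(0) := 1. -/

import Mathlib

noncomputable section

/-- `phi s = s * log s - s + 1` (note `phi 0 = 1` since `Real.log 0 = 0`). -/
def phi (s : ℝ) : ℝ := s * Real.log s - s + 1

open Real intervalIntegral in
lemma phi_eq_integral_of_le_one {t : ℝ} (ht : 0 < t) (ht1 : t ≤ 1) :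
    phi t = ∫ u in t..(1:ℝ), (-Real.log u) := by
  rw [integral_neg, integral_log]
  simp [phi]; ring

open Real intervalIntegral in
lemma phi_eq_integral_of_one_le {t : ℝ} (ht : 1 ≤ t) :
    phi t = ∫ u in (1:ℝ)..t, Real.log u := by
  rw [integral_log]
  simp [phi]

lemma log_ge_one_sub_inv {u : ℝ} (hu : 0 < u) : 1 - u⁻¹ ≤ Real.log u := by
  have h := Real.log_le_sub_one_of_pos (x := u⁻¹) (by positivity)
  rw [Real.log_inv] at h
  linarith

lemma phi_nonneg {s : ℝ} (hs : 0 ≤ s) : 0 ≤ phi s := by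
  rcases hs.eq_or_lt with h | h
  · simp [phi, ← h]
  · have h1 := log_ge_one_sub_inv h
    have h2 : s * s⁻¹ = 1 := mul_inv_cancel₀ h.ne'
    have : s * (1 - s⁻¹) ≤ s * Real.log s := by
      apply mul_le_mul_of_nonneg_left h1 h.le
    unfold phi
    nlinarith

open intervalIntegral in
lemma sq_le_two_phi {t : ℝ} (ht : 0 < t) (ht1 : t ≤ 1) : (1 - t)^2 ≤ 2 * phi t := by
  have key : (∫ u in t..(1:ℝ), (1 - u)) ≤ ∫ u in t..(1:ℝ), (-Real.log u) := by
    apply integral_mono_on ht1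
    · exact (continuousOn_const.sub continuousOn_id).intervalIntegrable
    · exact (intervalIntegrable_log (by
        intro h
        rw [Set.mem_uIcc] at h
        rcases h with ⟨h0, _⟩ | ⟨_, h0⟩ <;> linarith)).neg
    · intro u hu
      have hu0 : 0 < u := lt_of_lt_of_le ht hu.1
      have := Real.log_le_sub_one_of_pos hu0
      linarith
  rw [← phi_eq_integral_of_le_one ht ht1] at key
  have hval : (∫ u in t..(1:ℝ), (1 - u)) = (1 - t)^2 / 2 := by
    rw [integral_sub intervalIntegrable_const
      intervalIntegrable_id]
    simp [integral_id]
    ring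
  rw [hval] at key
  linarith

open intervalIntegral in
lemma sq_le_two_mul_phi {t : ℝ} (ht : 1 ≤ t) : (t - 1)^2 ≤ 2 * t * phi t := by
  have ht0 : (0:ℝ) < t := lt_of_lt_of_le one_pos ht
  have key : (∫ u in (1:ℝ)..t, ((u - 1) / t)) ≤ ∫ u in (1:ℝ)..t, Real.log u := by
    apply integral_mono_on ht
    · exact ((continuousOn_id.sub continuousOn_const).div_const t).intervalIntegrable
    · exact intervalIntegrable_log (by
        intro h
        rw [Set.mem_uIcc] at h
        rcases h with ⟨h0, _⟩ | ⟨_, h0⟩ <;> linarith)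
    · intro u hu
      have hu1 : 1 ≤ u := hu.1
      have hut : u ≤ t := hu.2
      have hu0 : 0 < u := lt_of_lt_of_le one_pos hu1
      have h1 := log_ge_one_sub_inv hu0
      have h2 : (u - 1) / t ≤ (u - 1) / u := by
        apply div_le_div_of_nonneg_left (by linarith) hu0 hut
      have h3 : (u - 1) / u = 1 - u⁻¹ := by field_simp
      calc (u - 1) / t ≤ (u - 1) / u := h2
      _ = 1 - u⁻¹ := h3
      _ ≤ Real.log u := h1
  rw [← phi_eq_integral_of_one_le ht] at key
  have hval : (∫ u in (1:ℝ)..t, ((u - 1) / t)) = (t - 1)^2 / (2 * t) := by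
    rw [integral_div]
    rw [integral_sub intervalIntegrable_id
      intervalIntegrable_const]
    simp [integral_id]
    field_simp
    ring
  rw [hval] at key
  rw [div_le_iff₀ (by positivity)] at key
  nlinarith [phi_nonneg ht0.le]

/-- Cross-term lemma. -/
lemma cross_le {K s t : ℝ} (hK : 1 ≤ K) (hs : s ∈ Set.Ioc 0 K) (ht : t ∈ Set.Ioc 0 K) :
    (s - 1) * (t - 1) ≤ K * (phi s + phi t) := by
  obtain ⟨hs0, hsK⟩ := hs
  obtain ⟨ht0, htK⟩ := ht
  have hps := phi_nonneg hs0.le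
  have hpt := phi_nonneg ht0.le
  rcases le_total s 1 with hs1 | hs1 <;> rcases le_total t 1 with ht1 | ht1
  · have h1 := sq_le_two_phi hs0 hs1
    have h2 := sq_le_two_phi ht0 ht1
    nlinarith [sq_nonneg (s - t), mul_nonneg (sub_nonneg.2 hK) (add_nonneg hps hpt)]
  · nlinarith
  · nlinarith
  · have h1 := sq_le_two_mul_phi hs1
    have h2 := sq_le_two_mul_phi ht1
    nlinarith [sq_nonneg (s - t), mul_nonneg (sub_nonneg.2 hsK) hps,
      mul_nonneg (sub_nonneg.2 htK) hpt]

lemma phi_mul {a b : ℝ} (ha : 0 < a) (hb : 0 < b) :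
    phi (a * b) = b * phi a + a * phi b + (a - 1) * (b - 1) := by
  unfold phi
  rw [Real.log_mul ha.ne' hb.ne']
  ring

lemma list_prod_pos {l : List ℝ} (hl : ∀ x ∈ l, (0:ℝ) < x) : 0 < l.prod := by
  induction l with
  | nil => simp
  | cons a l ih =>
    rw [List.prod_cons]
    exact mul_pos (hl a (by simp)) (ih fun x hx => hl x (List.mem_cons_of_mem a hx))

lemma list_prod_le_pow {K : ℝ} (hK : 1 ≤ K) {l : List ℝ}
    (hl : ∀ x ∈ l, x ∈ Set.Ioc (0:ℝ) K) : l.prod ≤ K ^ l.length := by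
  induction l with
  | nil => simp
  | cons a l ih =>
    rw [List.prod_cons, List.length_cons, pow_succ]
    have ha := hl a (by simp)
    have hrec := ih fun x hx => hl x (List.mem_cons_of_mem a hx)
    have hpos : 0 < l.prod := list_prod_pos fun x hx => (hl x (List.mem_cons_of_mem a hx)).1
    calc a * l.prod ≤ K * l.prod := by nlinarith [ha.2, hpos]
    _ ≤ K * K ^ l.length := by nlinarith [lt_of_lt_of_le one_pos hK]
    _ = K ^ l.length * K := by ring

lemma sum_map_phi_nonneg {l : List ℝ} (hl : ∀ x ∈ l, (0:ℝ) ≤ x) :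
    0 ≤ (l.map phi).sum := by
  induction l with
  | nil => simp
  | cons a l ih =>
    simp only [List.map_cons, List.sum_cons]
    have := phi_nonneg (hl a (by simp))
    have := ih fun x hx => hl x (List.mem_cons_of_mem a hx)
    linarith

lemma crossB (K : ℝ) (hK : 1 ≤ K) (l : List ℝ) (hl : ∀ x ∈ l, x ∈ Set.Ioc (0:ℝ) K)
    {t : ℝ} (ht : t ∈ Set.Ioc (0:ℝ) K) :
    (l.prod - 1) * (t - 1) ≤ K ^ l.length * ((l.map phi).sum + l.length * phi t) := by
  induction l with
  | nil => simp
  | cons a l ih =>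
    have ha := hl a (by simp)
    have hl' : ∀ x ∈ l, x ∈ Set.Ioc (0:ℝ) K := fun x hx => hl x (List.mem_cons_of_mem a hx)
    have hrec := ih hl'
    have hprodpos : 0 < l.prod := list_prod_pos fun x hx => (hl' x hx).1
    have hprodle : l.prod ≤ K ^ l.length := list_prod_le_pow hK hl'
    have hcross := cross_le hK ha ht
    have hKpos : (0:ℝ) < K := lt_of_lt_of_le one_pos hK
    have hKpow : (0:ℝ) < K ^ l.length := pow_pos hKpos _
    have hKpow1 : (1:ℝ) ≤ K ^ l.length := by
      calc (1:ℝ) = 1 ^ l.length := (one_pow _).symm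
      _ ≤ K ^ l.length := pow_le_pow_left₀ zero_le_one hK _
    have hpt := phi_nonneg ht.1.le
    have hpa := phi_nonneg ha.1.le
    have hsum := sum_map_phi_nonneg (l := l) fun x hx => (hl' x hx).1.le
    rw [List.prod_cons, List.length_cons, List.map_cons, List.sum_cons]
    have key : (a * l.prod - 1) * (t - 1)
        = l.prod * ((a - 1) * (t - 1)) + (l.prod - 1) * (t - 1) := by ring
    rw [key]
    have h1 : l.prod * ((a - 1) * (t - 1)) ≤ K ^ l.length * (K * (phi a + phi t)) := by
      rcases le_or_gt 0 ((a - 1) * (t - 1)) with h | h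
      · calc l.prod * ((a - 1) * (t - 1)) ≤ K ^ l.length * ((a - 1) * (t - 1)) :=
            mul_le_mul_of_nonneg_right hprodle h
        _ ≤ K ^ l.length * (K * (phi a + phi t)) :=
            mul_le_mul_of_nonneg_left hcross hKpow.le
      · calc l.prod * ((a - 1) * (t - 1)) ≤ 0 := mul_nonpos_of_nonneg_of_nonpos hprodpos.le h.le
        _ ≤ K ^ l.length * (K * (phi a + phi t)) := by positivity
    have h2 : (l.prod - 1) * (t - 1) ≤ K ^ (l.length + 1) * ((l.map phi).sum + l.length * phi t) := by
      calc (l.prod - 1) * (t - 1) ≤ K ^ l.length * ((l.map phi).sum + l.length * phi t) := hrec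
      _ ≤ K ^ (l.length + 1) * ((l.map phi).sum + l.length * phi t) := by
          rw [pow_succ]
          have hX : (0:ℝ) ≤ (l.map phi).sum + l.length * phi t := by positivity
          nlinarith [mul_nonneg (mul_nonneg hKpow.le (sub_nonneg.2 hK)) hX]
    calc l.prod * ((a - 1) * (t - 1)) + (l.prod - 1) * (t - 1)
        ≤ K ^ l.length * (K * (phi a + phi t))
          + K ^ (l.length + 1) * ((l.map phi).sum + l.length * phi t) := add_le_add h1 h2
    _ = K ^ (l.length + 1) * ((phi a + (l.map phi).sum) + (l.length + 1) * phi t) := by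
        rw [pow_succ]; ring
    _ = K ^ (l.length + 1) * (phi a + (l.map phi).sum + (↑(l.length + 1) : ℝ) * phi t) := by
        push_cast; ring

lemma listA (K : ℝ) (hK : 1 ≤ K) (l : List ℝ) (hl : ∀ x ∈ l, x ∈ Set.Ioc (0:ℝ) K) :
    K * phi l.prod ≤ l.length * K ^ l.length * (l.map phi).sum := by
  induction l with
  | nil => simp [phi]
  | cons a l ih =>
    have ha := hl a (by simp)
    have hl' : ∀ x ∈ l, x ∈ Set.Ioc (0:ℝ) K := fun x hx => hl x (List.mem_cons_of_mem a hx)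
    have hrec := ih hl'
    have hprodpos : 0 < l.prod := list_prod_pos fun x hx => (hl' x hx).1
    have hprodle : l.prod ≤ K ^ l.length := list_prod_le_pow hK hl'
    have hKpos : (0:ℝ) < K := lt_of_lt_of_le one_pos hK
    have hKpow : (0:ℝ) < K ^ l.length := pow_pos hKpos _
    have hpa := phi_nonneg ha.1.le
    have hpp := phi_nonneg hprodpos.le
    have hsum := sum_map_phi_nonneg (l := l) fun x hx => (hl' x hx).1.le
    have hB := crossB K hK l hl' ha
    rw [List.prod_cons, List.length_cons, List.map_cons, List.sum_cons]
    have hid : phi (a * l.prod) = l.prod * phi a + a * phi (l.prod)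
        + (l.prod - 1) * (a - 1) := by
      rw [mul_comm a l.prod, phi_mul hprodpos ha.1]; ring
    rw [hid]
    have t1 : K * (l.prod * phi a) ≤ K * (K ^ l.length * phi a) := by
      nlinarith [mul_nonneg (mul_nonneg hKpos.le hpa) (sub_nonneg.2 hprodle)]
    have t2 : K * (a * phi l.prod) ≤ l.length * (K * K ^ l.length) * (l.map phi).sum := by
      have step1 : a * (K * phi l.prod) ≤ a * (l.length * K ^ l.length * (l.map phi).sum) :=
        mul_le_mul_of_nonneg_left hrec ha.1.le
      have step2 : a * (l.length * K ^ l.length * (l.map phi).sum)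
          ≤ K * (l.length * K ^ l.length * (l.map phi).sum) := by
        apply mul_le_mul_of_nonneg_right ha.2
        positivity
      nlinarith [step1, step2]
    have t3 : K * ((l.prod - 1) * (a - 1))
        ≤ K * (K ^ l.length * ((l.map phi).sum + l.length * phi a)) :=
      mul_le_mul_of_nonneg_left hB hKpos.le
    have goal_eq : ((l.length + 1 : ℕ) : ℝ) * K ^ (l.length + 1) * (phi a + (l.map phi).sum)
        = K * (K ^ l.length * phi a) + l.length * (K * K ^ l.length) * (l.map phi).sum
          + K * (K ^ l.length * ((l.map phi).sum + l.length * phi a)) := by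
      push_cast
      rw [pow_succ]
      ring
    calc K * (l.prod * phi a + a * phi l.prod + (l.prod - 1) * (a - 1))
        = K * (l.prod * phi a) + K * (a * phi l.prod) + K * ((l.prod - 1) * (a - 1)) := by ring
    _ ≤ K * (K ^ l.length * phi a) + l.length * (K * K ^ l.length) * (l.map phi).sum
          + K * (K ^ l.length * ((l.map phi).sum + l.length * phi a)) :=
        add_le_add (add_le_add t1 t2) t3
    _ = ((l.length + 1 : ℕ) : ℝ) * K ^ (l.length + 1) * (phi a + (l.map phi).sum) :=
        goal_eq.symm

/-- Lemma A.1, approximate triangle inequality for `phi`: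
for `L > 0`, `n ≥ 1` and `s₁,…,s_n ∈ [0,L]`,
`phi (∏ₖ sₖ) ≤ n·max{2, L^{n−1}} · Σₖ phi (sₖ)`. -/
theorem phi_prod_le (L : ℝ) (hL : 0 < L) (n : ℕ) (hn : 1 ≤ n)
    (s : Fin n → ℝ) (hs : ∀ k, s k ∈ Set.Icc (0 : ℝ) L) :
    phi (∏ k, s k) ≤ (n : ℝ) * max 2 (L ^ (n - 1)) * ∑ k, phi (s k) := by
  have hphis : ∀ k, 0 ≤ phi (s k) := fun k => phi_nonneg (hs k).1
  have hsum : (0:ℝ) ≤ ∑ k, phi (s k) := Finset.sum_nonneg fun k _ => hphis k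
  have hmax2 : (2:ℝ) ≤ max 2 (L ^ (n - 1)) := le_max_left _ _
  by_cases hz : ∃ k, s k = 0
  · obtain ⟨k, hk⟩ := hz
    have hprod : (∏ j, s j) = 0 := Finset.prod_eq_zero (Finset.mem_univ k) hk
    rw [hprod]
    have hphi0 : phi 0 = 1 := by simp [phi]
    rw [hphi0]
    have h1 : phi (s k) ≤ ∑ j, phi (s j) :=
      Finset.single_le_sum (fun j _ => hphis j) (Finset.mem_univ k)
    rw [hk, hphi0] at h1
    have hn1 : (1:ℝ) ≤ (n:ℝ) := by exact_mod_cast hn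
    calc (1:ℝ) ≤ 2 * ∑ j, phi (s j) := by linarith
    _ ≤ max 2 (L ^ (n - 1)) * ∑ j, phi (s j) := mul_le_mul_of_nonneg_right hmax2 hsum
    _ = 1 * max 2 (L ^ (n - 1)) * ∑ j, phi (s j) := by ring
    _ ≤ (n : ℝ) * max 2 (L ^ (n - 1)) * ∑ j, phi (s j) := by
        apply mul_le_mul_of_nonneg_right _ hsum
        apply mul_le_mul_of_nonneg_right hn1 (by linarith)
  · push_neg at hz
    have hpos : ∀ k, 0 < s k := fun k => lt_of_le_of_ne (hs k).1 (Ne.symm (hz k))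
    set K := max 1 L with hKdef
    have hK1 : (1:ℝ) ≤ K := le_max_left _ _
    have hK0 : (0:ℝ) < K := lt_of_lt_of_le one_pos hK1
    set l := List.ofFn s with hldef
    have hmem : ∀ x ∈ l, x ∈ Set.Ioc (0:ℝ) K := by
      intro x hx
      rw [hldef, List.mem_ofFn] at hx
      obtain ⟨k, rfl⟩ := hx
      exact ⟨hpos k, le_trans (hs k).2 (le_max_right _ _)⟩
    have hA := listA K hK1 l hmem
    have hlen : l.length = n := by simp [hldef]
    have hprod : l.prod = ∏ k, s k := by rw [hldef, List.prod_ofFn]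
    have hsum' : (l.map phi).sum = ∑ k, phi (s k) := by
      rw [hldef, List.map_ofFn, List.sum_ofFn]
      rfl
    rw [hlen, hprod, hsum'] at hA
    -- divide by K
    have hn' : n - 1 + 1 = n := Nat.sub_add_cancel hn
    have hKn : K ^ n = K ^ (n - 1) * K := by
      conv_lhs => rw [← hn', pow_succ]
    have hA' : phi (∏ k, s k) ≤ (n:ℝ) * K ^ (n - 1) * ∑ k, phi (s k) := by
      have : K * phi (∏ k, s k) ≤ K * ((n:ℝ) * K ^ (n - 1) * ∑ k, phi (s k)) := by
        calc K * phi (∏ k, s k) ≤ (n:ℝ) * K ^ n * ∑ k, phi (s k) := hA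
        _ = K * ((n:ℝ) * K ^ (n - 1) * ∑ k, phi (s k)) := by rw [hKn]; ring
      exact le_of_mul_le_mul_left this hK0
    have hKbound : K ^ (n - 1) ≤ max 2 (L ^ (n - 1)) := by
      rcases le_total L 1 with h | h
      · have hKeq : K = 1 := max_eq_left h
        rw [hKeq, one_pow]
        linarith
      · have hKeq : K = L := max_eq_right h
        rw [hKeq]
        exact le_max_right _ _
    calc phi (∏ k, s k) ≤ (n:ℝ) * K ^ (n - 1) * ∑ k, phi (s k) := hA'
    _ ≤ (n:ℝ) * max 2 (L ^ (n - 1)) * ∑ k, phi (s k) := by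
        apply mul_le_mul_of_nonneg_right _ hsum
        apply mul_le_mul_of_nonneg_left hKbound (Nat.cast_nonneg n)
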